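/- Acceleration invariant: suppose D_h has the triangle scaling property with exponent γ ≥ 1 and constant τ > 0, Y^k = θ_k Z^k + (1−θ_k)P^k, the new iterate satisfies the inexact condition 0 ∈ ∂_{ν_k} f(P^{k+1}) + β_k(∇h(P^{k+1}) − ∇h(Y^k)), Z^{k+1} = argmin φ_{k+1}, and θ_k is chosen so that τ β_k θ_k^γ = σ ρ_k (1−θ_k). If f(P^k) ≤ φ_k^* + δ_k, then f(P^{k+1}) ≤ φ_{k+1}^* + δ_{k+1}, where δ_{k+1} = (1−θ_k)δ_k + ν_k and φ_k^* = min_P φ_k(P). -/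
import Mathlib


open scoped RealInnerProductSpace

theorem acceleration_invariant {E : Type*}
    [NormedAddCommGroup E] [InnerProductSpace ℝ E]
    (f h : E → ℝ) (hf : ConvexOn ℝ Set.univ f)
    (gh : E → E)
    (hconv : ∀ u v, h v + ⟪gh v, u - v⟫ ≤ h u)
    (D : E → E → ℝ) (hD : ∀ u v, D u v = h u - h v - ⟪gh v, u - v⟫)
    (γ τ : ℝ) (hγ : 1 ≤ γ) (hτ : 0 < τ)
    (hTSP : ∀ θ ∈ Set.Icc (0 : ℝ) 1, ∀ x y z : E,
      D ((1 - θ) • x + θ • y) ((1 - θ) • x + θ • z) ≤ τ * θ ^ γ * D y z)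
    (σ βk νk θk ρk δk : ℝ)
    (hσ : 0 < σ) (hβ : 0 < βk) (hν : 0 ≤ νk) (hρ : 0 < ρk) (hδ : 0 ≤ δk)
    (hθ : θk ∈ Set.Icc (0 : ℝ) 1)
    (Pk Pk1 Zk Zk1 Yk : E)
    (hY : Yk = θk • Zk + (1 - θk) • Pk)
    (φk φk1 : E → ℝ)
    (hφk : ∀ P, φk P = φk Zk + σ * ρk * D P Zk)
    (hφk1 : ∀ P, φk1 P = (1 - θk) * φk P
        + θk * (f Pk1 + βk * ⟪gh Yk - gh Pk1, P - Pk1⟫ - νk))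
    (hZk1 : ∀ P, φk1 Zk1 ≤ φk1 P)
    (hsub : ∀ Q, f Pk1 + βk * ⟪gh Yk - gh Pk1, Q - Pk1⟫ - νk ≤ f Q)
    (hθcond : τ * βk * θk ^ γ = σ * ρk * (1 - θk))
    (hk : f Pk ≤ φk Zk + δk) :
    f Pk1 ≤ φk1 Zk1 + ((1 - θk) * δk + νk) := by
  obtain ⟨hθ0, hθ1⟩ := hθ
  set g := gh Yk - gh Pk1 with hg
  set W := (1 - θk) • Pk + θk • Zk1 with hW
  have hDnn : ∀ u v, 0 ≤ D u v := fun u v => by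
    have := hconv u v; rw [hD]; linarith
  -- three point identity
  have h3 : ⟪g, W - Pk1⟫ + D W Yk = D W Pk1 + D Pk1 Yk := by
    simp only [hD, hg, inner_sub_left, inner_sub_right]
    ring
  -- triangle scaling
  have hTS : D W Yk ≤ τ * θk ^ γ * D Zk1 Zk := by
    have := hTSP θk ⟨hθ0, hθ1⟩ Pk Zk1 Zk
    rw [hY, add_comm (θk • Zk)]
    exact this
  have hC : βk * D W Yk ≤ σ * ρk * (1 - θk) * D Zk1 Zk := by
    calc βk * D W Yk ≤ βk * (τ * θk ^ γ * D Zk1 Zk) := by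
          exact mul_le_mul_of_nonneg_left hTS hβ.le
      _ = τ * βk * θk ^ γ * D Zk1 Zk := by ring
      _ = σ * ρk * (1 - θk) * D Zk1 Zk := by rw [hθcond]
  -- inner product decomposition
  have hlin : ⟪g, W - Pk1⟫ = (1 - θk) * ⟪g, Pk - Pk1⟫ + θk * ⟪g, Zk1 - Pk1⟫ := by
    have hWeq : W - Pk1 = (1 - θk) • (Pk - Pk1) + θk • (Zk1 - Pk1) := by
      rw [hW]; module
    rw [hWeq, inner_add_right, real_inner_smul_right, real_inner_smul_right]
  have hB := hsub Pk
  have hφval : φk1 Zk1 = (1 - θk) * (φk Zk + σ * ρk * D Zk1 Zk)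
      + θk * (f Pk1 + βk * ⟪g, Zk1 - Pk1⟫ - νk) := by
    rw [hφk1 Zk1, hφk Zk1]
  have h1 : 0 ≤ D W Pk1 := hDnn W Pk1
  have h2 : 0 ≤ D Pk1 Yk := hDnn Pk1 Yk
  have h4 : 0 ≤ βk * (D W Pk1 + D Pk1 Yk) := by positivity
  -- key: βk * ⟪g, W - Pk1⟫ ≥ -σρ(1-θ) D Zk1 Zk
  have hkey : -(σ * ρk * (1 - θk) * D Zk1 Zk) ≤ βk * ⟪g, W - Pk1⟫ := by
    nlinarith [mul_le_mul_of_nonneg_left (le_of_eq h3.symm) hβ.le]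
  have hmul : (1 - θk) * (f Pk1 + βk * ⟪g, Pk - Pk1⟫ - νk) ≤ (1 - θk) * (φk Zk + δk) := by
    apply mul_le_mul_of_nonneg_left _ (by linarith)
    linarith
  nlinarith [hkey, hmul, hφval, hlin]
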